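/- Let A be a real m×n matrix, let x, s ∈ ℝⁿ have all components positive, and let D be the n×n diagonal matrix with entries D_ii = √(x_i/s_i). Suppose δx, δs ∈ ℝⁿ and δλ ∈ ℝᵐ satisfy A δx = 0, Aᵀ δλ + δs = 0, and s ∘ δx + x ∘ δs = r for some r ∈ ℝⁿ. Then ‖D⁻¹ δx‖ ≤ ‖w‖ and ‖D δs‖ ≤ ‖w‖, where w ∈ ℝⁿ is the vector with components w_i = r_i / √(x_i s_i). In particular: (a) if r = x ∘ s then ‖D⁻¹ δx‖, ‖D δs‖ ≤ √(n μ) with μ = xᵀs/n; (b) if r = −ν · s ∘ u for ν ≥ 0 and u ∈ ℝⁿ, then ‖D⁻¹ δx‖, ‖D δs‖ ≤ ν ‖D⁻¹ u‖; (c) if r = −ν · x ∘ v for ν ≥ 0 and v ∈ ℝⁿ, then ‖D⁻¹ δx‖, ‖D δs‖ ≤ ν ‖D v‖. -/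

import Mathlib

open Matrix

/-- The Euclidean norm of a vector in `ℝⁿ`. -/
noncomputable def euclNorm {n : ℕ} (v : Fin n → ℝ) : ℝ :=
  Real.sqrt (∑ i, v i ^ 2)

/-- `D⁻¹ v`, where `D = diag(√(x_i/s_i))`. -/
noncomputable def dInvApp {n : ℕ} (x s v : Fin n → ℝ) : Fin n → ℝ :=
  fun i => Real.sqrt (s i / x i) * v i

/-- `D v`, where `D = diag(√(x_i/s_i))`. -/
noncomputable def dApp {n : ℕ} (x s v : Fin n → ℝ) : Fin n → ℝ :=
  fun i => Real.sqrt (x i / s i) * v i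

lemma sqrt_div_eq (a b : ℝ) (ha : 0 < a) (hb : 0 < b) :
    Real.sqrt (b / a) = b / Real.sqrt (a * b) := by
  rw [eq_div_iff (by positivity), ← Real.sqrt_mul (by positivity)]
  rw [show b / a * (a * b) = b ^ 2 by field_simp]
  exact Real.sqrt_sq hb.le

lemma euclNorm_smul_abs {n : ℕ} (c : ℝ) (hc : 0 ≤ c) (v : Fin n → ℝ) :
    euclNorm (fun i => c * v i) = c * euclNorm v := by
  unfold euclNorm
  rw [show ∑ i, (c * v i) ^ 2 = c ^ 2 * ∑ i, v i ^ 2 by rw [Finset.mul_sum]; ring_nf]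
  rw [Real.sqrt_mul (by positivity), Real.sqrt_sq hc]

theorem newton_solution_norm_bounds {m n : ℕ}
    (A : Matrix (Fin m) (Fin n) ℝ)
    (x s : Fin n → ℝ) (hx : ∀ i, 0 < x i) (hs : ∀ i, 0 < s i)
    (dx ds r : Fin n → ℝ) (dl : Fin m → ℝ)
    (h1 : A.mulVec dx = 0) (h2 : Aᵀ.mulVec dl + ds = 0)
    (h3 : ∀ i, s i * dx i + x i * ds i = r i) :
    euclNorm (dInvApp x s dx) ≤ euclNorm (fun i => r i / Real.sqrt (x i * s i)) ∧
    euclNorm (dApp x s ds) ≤ euclNorm (fun i => r i / Real.sqrt (x i * s i)) ∧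
    ((∀ i, r i = x i * s i) →
      euclNorm (dInvApp x s dx) ≤ Real.sqrt (n * (x ⬝ᵥ s / n)) ∧
      euclNorm (dApp x s ds) ≤ Real.sqrt (n * (x ⬝ᵥ s / n))) ∧
    (∀ (ν : ℝ), 0 ≤ ν → ∀ u : Fin n → ℝ, (∀ i, r i = -(ν * (s i * u i))) →
      euclNorm (dInvApp x s dx) ≤ ν * euclNorm (dInvApp x s u) ∧
      euclNorm (dApp x s ds) ≤ ν * euclNorm (dInvApp x s u)) ∧
    (∀ (ν : ℝ), 0 ≤ ν → ∀ v : Fin n → ℝ, (∀ i, r i = -(ν * (x i * v i))) →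
      euclNorm (dInvApp x s dx) ≤ ν * euclNorm (dApp x s v) ∧
      euclNorm (dApp x s ds) ≤ ν * euclNorm (dApp x s v)) := by
  set w : Fin n → ℝ := fun i => r i / Real.sqrt (x i * s i) with hw
  have hxs : ∀ i, 0 < Real.sqrt (x i * s i) :=
    fun i => Real.sqrt_pos.2 (mul_pos (hx i) (hs i))
  have hpdef : ∀ (v : Fin n → ℝ) i, dInvApp x s v i = s i * v i / Real.sqrt (x i * s i) := by
    intro v i
    unfold dInvApp
    rw [sqrt_div_eq _ _ (hx i) (hs i)]
    ring
  have hqdef : ∀ (v : Fin n → ℝ) i, dApp x s v i = x i * v i / Real.sqrt (x i * s i) := by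
    intro v i
    unfold dApp
    rw [show x i * s i = s i * x i by ring, sqrt_div_eq _ _ (hs i) (hx i),
      show s i * x i = x i * s i by ring]
    ring
  -- orthogonality
  have hdot : dx ⬝ᵥ ds = 0 := by
    have hds : ds = -(Aᵀ.mulVec dl) := by
      funext i; have := congrFun h2 i; simp at this ⊢; linarith
    rw [hds, dotProduct_neg, dotProduct_mulVec, vecMul_transpose, h1, zero_dotProduct, neg_zero]
  -- pointwise sum identity
  have hpq : ∀ i, dInvApp x s dx i + dApp x s ds i = w i := by
    intro i
    rw [hpdef, hqdef, hw]
    rw [← add_div, h3 i]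
  have hcross : ∑ i, dInvApp x s dx i * dApp x s ds i = 0 := by
    have : ∀ i, dInvApp x s dx i * dApp x s ds i = dx i * ds i := by
      intro i
      unfold dInvApp dApp
      have hxi := hx i; have hsi := hs i
      rw [show Real.sqrt (s i / x i) * dx i * (Real.sqrt (x i / s i) * ds i)
        = (Real.sqrt (s i / x i) * Real.sqrt (x i / s i)) * (dx i * ds i) by ring,
        ← Real.sqrt_mul (by positivity),
        show s i / x i * (x i / s i) = 1 by field_simp]
      simp
    rw [Finset.sum_congr rfl fun i _ => this i]
    exact hdot
  have hsum : ∑ i, w i ^ 2 =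
      (∑ i, dInvApp x s dx i ^ 2) + ∑ i, dApp x s ds i ^ 2 := by
    have : ∀ i, w i ^ 2 = dInvApp x s dx i ^ 2 + dApp x s ds i ^ 2
        + 2 * (dInvApp x s dx i * dApp x s ds i) := by
      intro i; rw [← hpq i]; ring
    rw [Finset.sum_congr rfl fun i _ => this i]
    rw [Finset.sum_add_distrib, Finset.sum_add_distrib, ← Finset.mul_sum, hcross]
    ring
  have hb1 : euclNorm (dInvApp x s dx) ≤ euclNorm w := by
    apply Real.sqrt_le_sqrt
    rw [hsum]
    have : (0:ℝ) ≤ ∑ i, dApp x s ds i ^ 2 := by positivity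
    linarith
  have hb2 : euclNorm (dApp x s ds) ≤ euclNorm w := by
    apply Real.sqrt_le_sqrt
    rw [hsum]
    have : (0:ℝ) ≤ ∑ i, dInvApp x s dx i ^ 2 := by positivity
    linarith
  refine ⟨hb1, hb2, ?_, ?_, ?_⟩
  · -- case (a)
    intro hr
    have hwv : euclNorm w = Real.sqrt (n * (x ⬝ᵥ s / n)) := by
      unfold euclNorm
      congr 1
      have hwi : ∀ i, w i ^ 2 = x i * s i := by
        intro i
        have hxi := hx i; have hsi := hs i
        rw [hw]
        simp only
        rw [hr i, div_pow, Real.sq_sqrt (by positivity), sq, mul_div_assoc,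
          div_self (by positivity), mul_one]
      rw [Finset.sum_congr rfl fun i _ => hwi i]
      rcases Nat.eq_zero_or_pos n with hn | hn
      · subst hn; simp [dotProduct]
      · rw [mul_div_cancel₀ _ (by exact_mod_cast hn.ne')]
        rfl
    exact ⟨hwv ▸ hb1, hwv ▸ hb2⟩
  · -- case (b)
    intro ν hν u hr
    have hwv : euclNorm w = ν * euclNorm (dInvApp x s u) := by
      rw [← euclNorm_smul_abs ν hν]
      unfold euclNorm
      congr 1
      refine Finset.sum_congr rfl fun i _ => ?_
      rw [hw]
      simp only
      rw [hr i, hpdef]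
      ring
    exact ⟨hwv ▸ hb1, hwv ▸ hb2⟩
  · -- case (c)
    intro ν hν v hr
    have hwv : euclNorm w = ν * euclNorm (dApp x s v) := by
      rw [← euclNorm_smul_abs ν hν]
      unfold euclNorm
      congr 1
      refine Finset.sum_congr rfl fun i _ => ?_
      rw [hw]
      simp only
      rw [hr i, hqdef]
      ring
    exact ⟨hwv ▸ hb1, hwv ▸ hb2⟩
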